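/- For every positive integer a, σ(a) ≤ ⌈√a + √(a+1)⌉. -/
import Mathlib


noncomputable def sigmaN (a : ℕ) : ℕ :=
  sInf {s : ℕ | 0 < s ∧ ∃ t : ℕ, 0 < t ∧ s^2 * a < t^2 ∧ t^2 < s^2 * (a+1)}

lemma irrational_sum_sqrt (a : ℕ) (ha : 0 < a) :
    Irrational (Real.sqrt a + Real.sqrt (a+1)) := by
  have hsq : ¬ IsSquare (a * (a+1)) := by
    rintro ⟨r, hr⟩
    have h1 : a * a < a * (a+1) := by nlinarith
    have h2 : a * (a+1) < (a+1) * (a+1) := by nlinarith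
    have hra : a < r := by nlinarith
    have hrb : r < a + 1 := by nlinarith
    omega
  have hirr : Irrational (Real.sqrt ((a : ℝ) * (a+1))) := by
    have := irrational_sqrt_natCast_iff.mpr hsq
    have hc : ((a * (a+1) : ℕ) : ℝ) = (a : ℝ) * (a+1) := by push_cast; ring
    rwa [hc] at this
  -- (√a + √(a+1))² = 2a+1 + 2√(a(a+1))
  intro ⟨q, hq⟩
  have hx2 : (Real.sqrt a + Real.sqrt (a+1))^2
      = (2*a+1) + 2 * Real.sqrt ((a:ℝ) * (a+1)) := by
    have h1 : Real.sqrt a ^ 2 = (a : ℝ) := Real.sq_sqrt (by positivity)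
    have h2 : Real.sqrt (a+1) ^ 2 = (a : ℝ) + 1 := Real.sq_sqrt (by positivity)
    have h3 : Real.sqrt a * Real.sqrt (a+1) = Real.sqrt ((a:ℝ)*(a+1)) :=
      (Real.sqrt_mul (by positivity) _).symm
    nlinarith [h1, h2, h3]
  have : Real.sqrt ((a:ℝ) * (a+1)) = ((q^2 - (2*a+1)) / 2 : ℚ) := by
    have : ((q : ℝ))^2 = (2*a+1) + 2 * Real.sqrt ((a:ℝ) * (a+1)) := by
      rw [hq]; exact hx2
    push_cast
    linarith
  exact hirr ⟨_, this.symm⟩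

theorem stmt_12 (a : ℕ) (ha : 0 < a) :
    sigmaN a ≤ ⌈Real.sqrt a + Real.sqrt (a+1)⌉₊ := by
  set x : ℝ := Real.sqrt a + Real.sqrt (a+1) with hxdef
  set s : ℕ := ⌈x⌉₊ with hs
  have hxpos : 0 < x := by
    have : 0 < Real.sqrt (a+1) := Real.sqrt_pos.mpr (by positivity)
    have : 0 ≤ Real.sqrt (a : ℝ) := Real.sqrt_nonneg _
    unfold x; linarith
  have hirr := irrational_sum_sqrt a ha
  have hsx : x < (s : ℝ) := by
    rcases lt_or_eq_of_le (Nat.le_ceil x) with h | h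
    · exact h
    · exact ((show x ≠ (s:ℝ) from hirr.ne_nat s) h).elim
  have hspos : 0 < s := by
    rw [hs]; exact Nat.ceil_pos.mpr hxpos
  set t : ℕ := ⌊(s : ℝ) * Real.sqrt a⌋₊ + 1 with ht
  have hsa_nonneg : (0:ℝ) ≤ (s : ℝ) * Real.sqrt a := by positivity
  have h1 : (s : ℝ) * Real.sqrt a < t := by
    rw [ht]; push_cast; exact Nat.lt_floor_add_one _
  have h2 : (t : ℝ) ≤ (s : ℝ) * Real.sqrt a + 1 := by
    rw [ht]; push_cast
    have := Nat.floor_le hsa_nonneg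
    linarith
  have hdiff : (Real.sqrt (a+1) - Real.sqrt a) * x = 1 := by
    have h1 : Real.sqrt a ^ 2 = (a : ℝ) := Real.sq_sqrt (by positivity)
    have h2 : Real.sqrt (a+1) ^ 2 = (a : ℝ) + 1 := Real.sq_sqrt (by positivity)
    unfold x; nlinarith
  have hdpos : 0 < Real.sqrt (a+1) - Real.sqrt a := by
    by_contra h
    push_neg at h
    nlinarith
  have h3 : 1 < (s : ℝ) * (Real.sqrt (a+1) - Real.sqrt a) := by
    have := mul_lt_mul_of_pos_left hsx hdpos
    nlinarith
  have h4 : (t : ℝ) < (s : ℝ) * Real.sqrt (a+1) := by nlinarith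
  have hts : (0:ℝ) ≤ (t : ℝ) := by positivity
  -- square the inequalities
  have hsq1 : ((s:ℝ))^2 * a < (t:ℝ)^2 := by
    have hA : ((s:ℝ) * Real.sqrt a)^2 = (s:ℝ)^2 * a := by
      rw [mul_pow, Real.sq_sqrt (by positivity : (0:ℝ) ≤ (a:ℝ))]
    nlinarith [mul_self_nonneg ((s:ℝ) * Real.sqrt a)]
  have hsq2 : (t:ℝ)^2 < ((s:ℝ))^2 * (a+1) := by
    have hA : ((s:ℝ) * Real.sqrt (a+1))^2 = (s:ℝ)^2 * ((a:ℝ)+1) := by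
      rw [mul_pow, Real.sq_sqrt (by positivity : (0:ℝ) ≤ (a:ℝ)+1)]
    nlinarith
  have hn1 : s^2 * a < t^2 := by exact_mod_cast hsq1
  have hn2 : t^2 < s^2 * (a+1) := by exact_mod_cast hsq2
  exact Nat.sInf_le ⟨hspos, t, Nat.succ_pos _, hn1, hn2⟩
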